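/- Let G be a P6-free graph (no induced path on 6 vertices) and v ∈ V(G) such that the subgraph induced by N(v) is connected and bipartite with bipartition (A,B). Let G' be the graph obtained from G \ (A ∪ B) by adding two new adjacent vertices a, b where the neighborhood of a in G' is {b} together with all vertices of V(G') having a G-neighbor in A, and the neighborhood of b in G' is {a} together with all vertices of V(G') having a G-neighbor in B. Then G' is P6-free. -/

import Mathlib

open SimpleGraph

/-- The contracted graph `G'`: delete `A ∪ B` and add two new adjacent vertices `a`
(= `Sum.inr 0`) and `b` (= `Sum.inr 1`), where `a` is adjacent to the vertices that had a
neighbor in `A` and `b` to those that had a neighbor in `B`. -/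
def contractBip {V : Type*} (G : SimpleGraph V) (A B : Set V) :
    SimpleGraph ({w : V // w ∉ A ∪ B} ⊕ Fin 2) :=
  SimpleGraph.fromRel (fun x y =>
    match x, y with
    | Sum.inl u, Sum.inl w => G.Adj u.1 w.1
    | Sum.inl u, Sum.inr i =>
        (i = 0 ∧ ∃ a ∈ A, G.Adj u.1 a) ∨ (i = 1 ∧ ∃ b ∈ B, G.Adj u.1 b)
    | Sum.inr i, Sum.inr j => i = 0 ∧ j = 1
    | Sum.inr _, Sum.inl _ => False)

section Helpers

variable {V : Type*} {G : SimpleGraph V} {A B : Set V} {v : V}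

lemma cb_inl_inl (u w : {w : V // w ∉ A ∪ B}) :
    (contractBip G A B).Adj (Sum.inl u) (Sum.inl w) ↔ G.Adj u.1 w.1 := by
  simp only [contractBip, fromRel_adj]
  constructor
  · rintro ⟨-, h | h⟩
    · exact h
    · exact h.symm
  · intro h
    exact ⟨by simp [Subtype.ext_iff, h.ne], Or.inl h⟩

lemma cb_inl_a (u : {w : V // w ∉ A ∪ B}) :
    (contractBip G A B).Adj (Sum.inl u) (Sum.inr 0) ↔ ∃ a ∈ A, G.Adj u.1 a := by
  simp [contractBip, fromRel_adj]

lemma cb_inl_b (u : {w : V // w ∉ A ∪ B}) :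
    (contractBip G A B).Adj (Sum.inl u) (Sum.inr 1) ↔ ∃ b ∈ B, G.Adj u.1 b := by
  simp [contractBip, fromRel_adj]

lemma cb_ab : (contractBip G A B).Adj (Sum.inr 0) (Sum.inr 1) := by
  simp [contractBip, fromRel_adj]

/-- Build a `pathGraph 6` embedding from six suitable vertices. -/
lemma buildP6 {V : Type*} {G : SimpleGraph V} (x0 x1 x2 x3 x4 x5 : V)
    (e01 : G.Adj x0 x1) (e12 : G.Adj x1 x2) (e23 : G.Adj x2 x3)
    (e34 : G.Adj x3 x4) (e45 : G.Adj x4 x5)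
    (n02 : ¬ G.Adj x0 x2) (n03 : ¬ G.Adj x0 x3) (n04 : ¬ G.Adj x0 x4)
    (n05 : ¬ G.Adj x0 x5) (n13 : ¬ G.Adj x1 x3) (n14 : ¬ G.Adj x1 x4)
    (n15 : ¬ G.Adj x1 x5) (n24 : ¬ G.Adj x2 x4) (n25 : ¬ G.Adj x2 x5)
    (n35 : ¬ G.Adj x3 x5)
    (d02 : x0 ≠ x2) (d03 : x0 ≠ x3) (d04 : x0 ≠ x4) (d05 : x0 ≠ x5)
    (d13 : x1 ≠ x3) (d14 : x1 ≠ x4) (d15 : x1 ≠ x5) (d24 : x2 ≠ x4)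
    (d25 : x2 ≠ x5) (d35 : x3 ≠ x5) :
    Nonempty (pathGraph 6 ↪g G) := by
  have e10 := e01.symm; have e21 := e12.symm; have e32 := e23.symm
  have e43 := e34.symm; have e54 := e45.symm
  have n20 : ¬ G.Adj x2 x0 := fun h => n02 h.symm
  have n30 : ¬ G.Adj x3 x0 := fun h => n03 h.symm
  have n40 : ¬ G.Adj x4 x0 := fun h => n04 h.symm
  have n50 : ¬ G.Adj x5 x0 := fun h => n05 h.symm
  have n31 : ¬ G.Adj x3 x1 := fun h => n13 h.symm
  have n41 : ¬ G.Adj x4 x1 := fun h => n14 h.symm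
  have n51 : ¬ G.Adj x5 x1 := fun h => n15 h.symm
  have n42 : ¬ G.Adj x4 x2 := fun h => n24 h.symm
  have n52 : ¬ G.Adj x5 x2 := fun h => n25 h.symm
  have n53 : ¬ G.Adj x5 x3 := fun h => n35 h.symm
  have d20 := d02.symm; have d30 := d03.symm; have d40 := d04.symm
  have d50 := d05.symm; have d31 := d13.symm; have d41 := d14.symm
  have d51 := d15.symm; have d42 := d24.symm; have d52 := d25.symm
  have d53 := d35.symm
  have d01 := e01.ne; have d12 := e12.ne; have d23 := e23.ne
  have d34 := e34.ne; have d45 := e45.ne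
  have d10 := d01.symm; have d21 := d12.symm; have d32 := d23.symm
  have d43 := d34.symm; have d54 := d45.symm
  have hiff : ∀ i j : Fin 6,
      G.Adj (![x0,x1,x2,x3,x4,x5] i) (![x0,x1,x2,x3,x4,x5] j) ↔ (pathGraph 6).Adj i j := by
    intro i j
    fin_cases i <;> fin_cases j <;>
      first
        | exact iff_of_true (by assumption) (by rw [pathGraph_adj]; decide)
        | exact iff_of_false (by assumption) (by rw [pathGraph_adj]; decide)
        | exact iff_of_false (G.irrefl) (by rw [pathGraph_adj]; decide)
  have hinj : Function.Injective (![x0,x1,x2,x3,x4,x5] : Fin 6 → V) := by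
    intro i j hij
    fin_cases i <;> fin_cases j <;>
      first
        | rfl
        | exact absurd hij (by assumption)
  exact ⟨⟨⟨![x0,x1,x2,x3,x4,x5], hinj⟩, fun {a b} => hiff a b⟩⟩

lemma pa6 {i j : Fin 6} (h : i.val + 1 = j.val ∨ j.val + 1 = i.val) :
    (pathGraph 6).Adj i j := pathGraph_adj.mpr h

lemma npa6 {i j : Fin 6} (h : ¬(i.val + 1 = j.val ∨ j.val + 1 = i.val)) :
    ¬ (pathGraph 6).Adj i j := fun a => h (pathGraph_adj.mp a)

variable {f : pathGraph 6 ↪g contractBip G A B}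

lemma adjP {i j : Fin 6} {u w : {w : V // w ∉ A ∪ B}}
    (hu : f i = Sum.inl u) (hw : f j = Sum.inl w) (h : (pathGraph 6).Adj i j) :
    G.Adj u.1 w.1 :=
  (cb_inl_inl u w).mp (by rw [← hu, ← hw]; exact f.map_rel_iff.mpr h)

lemma nadjP {i j : Fin 6} {u w : {w : V // w ∉ A ∪ B}}
    (hu : f i = Sum.inl u) (hw : f j = Sum.inl w) (h : ¬ (pathGraph 6).Adj i j) :
    ¬ G.Adj u.1 w.1 := fun a =>
  h (f.map_rel_iff.mp (by rw [hu, hw]; exact (cb_inl_inl u w).mpr a))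

lemma neP {i j : Fin 6} {u w : {w : V // w ∉ A ∪ B}}
    (hu : f i = Sum.inl u) (hw : f j = Sum.inl w) (hij : i ≠ j) : u.1 ≠ w.1 :=
  fun e => hij (f.injective (hu.trans ((congrArg Sum.inl (Subtype.ext e)).trans hw.symm)))

lemma hasAP {i j : Fin 6} {u : {w : V // w ∉ A ∪ B}}
    (hu : f i = Sum.inl u) (hj : f j = Sum.inr 0) (h : (pathGraph 6).Adj i j) :
    ∃ a ∈ A, G.Adj u.1 a :=
  (cb_inl_a u).mp (by rw [← hu, ← hj]; exact f.map_rel_iff.mpr h)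

lemma noAP {i j : Fin 6} {u : {w : V // w ∉ A ∪ B}}
    (hu : f i = Sum.inl u) (hj : f j = Sum.inr 0) (h : ¬ (pathGraph 6).Adj i j) :
    ∀ a ∈ A, ¬ G.Adj u.1 a := fun a ha hadj =>
  h (f.map_rel_iff.mp (by rw [hu, hj]; exact (cb_inl_a u).mpr ⟨a, ha, hadj⟩))

lemma hasBP {i j : Fin 6} {u : {w : V // w ∉ A ∪ B}}
    (hu : f i = Sum.inl u) (hj : f j = Sum.inr 1) (h : (pathGraph 6).Adj i j) :
    ∃ b ∈ B, G.Adj u.1 b :=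
  (cb_inl_b u).mp (by rw [← hu, ← hj]; exact f.map_rel_iff.mpr h)

lemma noBP {i j : Fin 6} {u : {w : V // w ∉ A ∪ B}}
    (hu : f i = Sum.inl u) (hj : f j = Sum.inr 1) (h : ¬ (pathGraph 6).Adj i j) :
    ∀ b ∈ B, ¬ G.Adj u.1 b := fun b hb hadj =>
  h (f.map_rel_iff.mp (by rw [hu, hj]; exact (cb_inl_b u).mpr ⟨b, hb, hadj⟩))

lemma v_adj (hN : A ∪ B = G.neighborSet v) {x : V} (hx : x ∈ A ∪ B) : G.Adj v x :=
  (G.mem_neighborSet v x).mp ((Set.ext_iff.mp hN x).mp hx)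

lemma v_nadj (hN : A ∪ B = G.neighborSet v) (u : {w : V // w ∉ A ∪ B}) :
    ¬ G.Adj v u.1 := fun h => u.2 ((Set.ext_iff.mp hN u.1).mpr h)

lemma v_not_mem (hN : A ∪ B = G.neighborSet v) : v ∉ A ∪ B :=
  fun h => G.irrefl (v_adj hN h)

lemma ne_v_real (hN : A ∪ B = G.neighborSet v) {u w : {w : V // w ∉ A ∪ B}}
    (h : G.Adj u.1 w.1) : u.1 ≠ v := fun e => v_nadj hN w (e ▸ h)

lemma neABx {x y : V} (hx : x ∈ A ∪ B) (hy : y ∉ A ∪ B) : x ≠ y :=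
  fun e => hy (e ▸ hx)

end Helpers

section Core

variable {V : Type*} {G : SimpleGraph V} {A B : Set V} {v : V}
variable {f : pathGraph 6 ↪g contractBip G A B}

/-- All six vertices real: direct copy of the path. -/
lemma allReal (hfree : ¬ Nonempty (pathGraph 6 ↪g G))
    (hu : ∀ j : Fin 6, ∃ u, f j = Sum.inl u) : False := by
  choose u hu using hu
  refine hfree ⟨⟨⟨fun i => (u i).1, ?_⟩, ?_⟩⟩
  · intro i j h
    apply f.injective
    rw [hu i, hu j]
    exact congrArg Sum.inl (Subtype.ext h)
  · intro i j
    constructor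
    · intro h
      exact f.map_rel_iff.mp (by rw [hu i, hu j]; exact (cb_inl_inl _ _).mpr h)
    · intro h
      exact adjP (hu i) (hu j) h

/-- `a` at position 0, `b` absent. -/
lemma singleAt0 (hN : A ∪ B = G.neighborSet v)
    (hfree : ¬ Nonempty (pathGraph 6 ↪g G))
    (h0 : f 0 = Sum.inr 0)
    {u1 u2 u3 u4 u5 : {w : V // w ∉ A ∪ B}}
    (h1 : f 1 = Sum.inl u1) (h2 : f 2 = Sum.inl u2) (h3 : f 3 = Sum.inl u3)
    (h4 : f 4 = Sum.inl u4) (h5 : f 5 = Sum.inl u5) : False := by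
  obtain ⟨a1, haA, ha1⟩ := hasAP h1 h0 (pa6 (by decide))
  exact hfree (buildP6 a1 u1.1 u2.1 u3.1 u4.1 u5.1
    ha1.symm
    (adjP h1 h2 (pa6 (by decide))) (adjP h2 h3 (pa6 (by decide)))
    (adjP h3 h4 (pa6 (by decide))) (adjP h4 h5 (pa6 (by decide)))
    (fun h => noAP h2 h0 (npa6 (by decide)) a1 haA h.symm)
    (fun h => noAP h3 h0 (npa6 (by decide)) a1 haA h.symm)
    (fun h => noAP h4 h0 (npa6 (by decide)) a1 haA h.symm)
    (fun h => noAP h5 h0 (npa6 (by decide)) a1 haA h.symm)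
    (nadjP h1 h3 (npa6 (by decide))) (nadjP h1 h4 (npa6 (by decide)))
    (nadjP h1 h5 (npa6 (by decide))) (nadjP h2 h4 (npa6 (by decide)))
    (nadjP h2 h5 (npa6 (by decide))) (nadjP h3 h5 (npa6 (by decide)))
    (neABx (Set.mem_union_left B haA) u2.2) (neABx (Set.mem_union_left B haA) u3.2)
    (neABx (Set.mem_union_left B haA) u4.2) (neABx (Set.mem_union_left B haA) u5.2)
    (neP h1 h3 (by decide)) (neP h1 h4 (by decide)) (neP h1 h5 (by decide))
    (neP h2 h4 (by decide)) (neP h2 h5 (by decide)) (neP h3 h5 (by decide)))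

/-- `a` at position 1, `b` absent. -/
lemma singleAt1 (hN : A ∪ B = G.neighborSet v)
    (hAst : ∀ x ∈ A, ∀ y ∈ A, ¬ G.Adj x y)
    (hfree : ¬ Nonempty (pathGraph 6 ↪g G))
    (h1 : f 1 = Sum.inr 0)
    {u0 u2 u3 u4 u5 : {w : V // w ∉ A ∪ B}}
    (h0 : f 0 = Sum.inl u0) (h2 : f 2 = Sum.inl u2) (h3 : f 3 = Sum.inl u3)
    (h4 : f 4 = Sum.inl u4) (h5 : f 5 = Sum.inl u5) : False := by
  classical
  obtain ⟨a1, ha1A, ha1⟩ := hasAP h0 h1 (pa6 (by decide))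
  obtain ⟨a2, ha2A, ha2⟩ := hasAP h2 h1 (pa6 (by decide))
  by_cases hc : ∃ x ∈ A, G.Adj u0.1 x ∧ G.Adj u2.1 x
  · obtain ⟨x, hxA, hx0, hx2⟩ := hc
    exact hfree (buildP6 u0.1 x u2.1 u3.1 u4.1 u5.1
      hx0 hx2.symm
      (adjP h2 h3 (pa6 (by decide))) (adjP h3 h4 (pa6 (by decide)))
      (adjP h4 h5 (pa6 (by decide)))
      (nadjP h0 h2 (npa6 (by decide))) (nadjP h0 h3 (npa6 (by decide)))
      (nadjP h0 h4 (npa6 (by decide))) (nadjP h0 h5 (npa6 (by decide)))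
      (fun h => noAP h3 h1 (npa6 (by decide)) x hxA h.symm)
      (fun h => noAP h4 h1 (npa6 (by decide)) x hxA h.symm)
      (fun h => noAP h5 h1 (npa6 (by decide)) x hxA h.symm)
      (nadjP h2 h4 (npa6 (by decide))) (nadjP h2 h5 (npa6 (by decide)))
      (nadjP h3 h5 (npa6 (by decide)))
      (neP h0 h2 (by decide)) (neP h0 h3 (by decide)) (neP h0 h4 (by decide))
      (neP h0 h5 (by decide))
      (neABx (Set.mem_union_left B hxA) u3.2) (neABx (Set.mem_union_left B hxA) u4.2)
      (neABx (Set.mem_union_left B hxA) u5.2)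
      (neP h2 h4 (by decide)) (neP h2 h5 (by decide)) (neP h3 h5 (by decide)))
  · push_neg at hc
    have hn2a1 : ¬ G.Adj u2.1 a1 := hc a1 ha1A ha1
    have hn0a2 : ¬ G.Adj u0.1 a2 := fun h => hc a2 ha2A h ha2
    have hu0v : u0.1 ≠ v := fun e =>
      hc a2 ha2A (by rw [e]; exact v_adj hN (Set.mem_union_left B ha2A)) ha2
    have hu2v : u2.1 ≠ v := ne_v_real hN (adjP h2 h3 (pa6 (by decide)))
    have hu3v : u3.1 ≠ v := ne_v_real hN (adjP h3 h4 (pa6 (by decide)))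
    exact hfree (buildP6 u0.1 a1 v a2 u2.1 u3.1
      ha1
      (v_adj hN (Set.mem_union_left B ha1A)).symm
      (v_adj hN (Set.mem_union_left B ha2A))
      ha2.symm
      (adjP h2 h3 (pa6 (by decide)))
      (fun h => v_nadj hN u0 h.symm)
      hn0a2
      (nadjP h0 h2 (npa6 (by decide))) (nadjP h0 h3 (npa6 (by decide)))
      (hAst a1 ha1A a2 ha2A)
      (fun h => hn2a1 h.symm)
      (fun h => noAP h3 h1 (npa6 (by decide)) a1 ha1A h.symm)
      (v_nadj hN u2) (v_nadj hN u3)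
      (fun h => noAP h3 h1 (npa6 (by decide)) a2 ha2A h.symm)
      hu0v
      (neABx (Set.mem_union_left B ha2A) u0.2).symm
      (neP h0 h2 (by decide)) (neP h0 h3 (by decide))
      (fun e => hn2a1 (by rw [e]; exact ha2))
      (neABx (Set.mem_union_left B ha1A) u2.2) (neABx (Set.mem_union_left B ha1A) u3.2)
      hu2v.symm hu3v.symm
      (neABx (Set.mem_union_left B ha2A) u3.2))

/-- `a` at position 2, `b` absent. -/
lemma singleAt2 (hN : A ∪ B = G.neighborSet v)
    (hAst : ∀ x ∈ A, ∀ y ∈ A, ¬ G.Adj x y)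
    (hfree : ¬ Nonempty (pathGraph 6 ↪g G))
    (h2 : f 2 = Sum.inr 0)
    {u0 u1 u3 u4 u5 : {w : V // w ∉ A ∪ B}}
    (h0 : f 0 = Sum.inl u0) (h1 : f 1 = Sum.inl u1) (h3 : f 3 = Sum.inl u3)
    (h4 : f 4 = Sum.inl u4) (h5 : f 5 = Sum.inl u5) : False := by
  classical
  obtain ⟨a1, ha1A, ha1⟩ := hasAP h1 h2 (pa6 (by decide))
  obtain ⟨a2, ha2A, ha2⟩ := hasAP h3 h2 (pa6 (by decide))
  by_cases hc : ∃ x ∈ A, G.Adj u1.1 x ∧ G.Adj u3.1 x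
  · obtain ⟨x, hxA, hx1, hx3⟩ := hc
    exact hfree (buildP6 u0.1 u1.1 x u3.1 u4.1 u5.1
      (adjP h0 h1 (pa6 (by decide)))
      hx1 hx3.symm
      (adjP h3 h4 (pa6 (by decide))) (adjP h4 h5 (pa6 (by decide)))
      (noAP h0 h2 (npa6 (by decide)) x hxA)
      (nadjP h0 h3 (npa6 (by decide))) (nadjP h0 h4 (npa6 (by decide)))
      (nadjP h0 h5 (npa6 (by decide)))
      (nadjP h1 h3 (npa6 (by decide))) (nadjP h1 h4 (npa6 (by decide)))
      (nadjP h1 h5 (npa6 (by decide)))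
      (fun h => noAP h4 h2 (npa6 (by decide)) x hxA h.symm)
      (fun h => noAP h5 h2 (npa6 (by decide)) x hxA h.symm)
      (nadjP h3 h5 (npa6 (by decide)))
      (neABx (Set.mem_union_left B hxA) u0.2).symm
      (neP h0 h3 (by decide)) (neP h0 h4 (by decide)) (neP h0 h5 (by decide))
      (neP h1 h3 (by decide)) (neP h1 h4 (by decide)) (neP h1 h5 (by decide))
      (neABx (Set.mem_union_left B hxA) u4.2) (neABx (Set.mem_union_left B hxA) u5.2)
      (neP h3 h5 (by decide)))
  · push_neg at hc
    have hn3a1 : ¬ G.Adj u3.1 a1 := hc a1 ha1A ha1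
    have hn1a2 : ¬ G.Adj u1.1 a2 := fun h => hc a2 ha2A h ha2
    exact hfree (buildP6 u0.1 u1.1 a1 v a2 u3.1
      (adjP h0 h1 (pa6 (by decide)))
      ha1
      (v_adj hN (Set.mem_union_left B ha1A)).symm
      (v_adj hN (Set.mem_union_left B ha2A))
      ha2.symm
      (noAP h0 h2 (npa6 (by decide)) a1 ha1A)
      (fun h => v_nadj hN u0 h.symm)
      (noAP h0 h2 (npa6 (by decide)) a2 ha2A)
      (nadjP h0 h3 (npa6 (by decide)))
      (fun h => v_nadj hN u1 h.symm)
      hn1a2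
      (nadjP h1 h3 (npa6 (by decide)))
      (hAst a1 ha1A a2 ha2A)
      (fun h => hn3a1 h.symm)
      (v_nadj hN u3)
      (neABx (Set.mem_union_left B ha1A) u0.2).symm
      (ne_v_real hN (adjP h0 h1 (pa6 (by decide))))
      (neABx (Set.mem_union_left B ha2A) u0.2).symm
      (neP h0 h3 (by decide))
      (ne_v_real hN (adjP h1 h0 (pa6 (by decide))))
      (neABx (Set.mem_union_left B ha2A) u1.2).symm
      (neP h1 h3 (by decide))
      (fun e => hn3a1 (by rw [e]; exact ha2))
      (neABx (Set.mem_union_left B ha1A) u3.2)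
      (ne_v_real hN (adjP h3 h4 (pa6 (by decide)))).symm)

/-- `a` at position 0, `b` at position 1. -/
lemma pairAt0 (hN : A ∪ B = G.neighborSet v)
    (hfree : ¬ Nonempty (pathGraph 6 ↪g G))
    (h0 : f 0 = Sum.inr 0) (h1 : f 1 = Sum.inr 1)
    {u2 u3 u4 u5 : {w : V // w ∉ A ∪ B}}
    (h2 : f 2 = Sum.inl u2) (h3 : f 3 = Sum.inl u3)
    (h4 : f 4 = Sum.inl u4) (h5 : f 5 = Sum.inl u5) : False := by
  obtain ⟨b1, hbB, hb1⟩ := hasBP h2 h1 (pa6 (by decide))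
  exact hfree (buildP6 v b1 u2.1 u3.1 u4.1 u5.1
    (v_adj hN (Set.mem_union_right A hbB))
    hb1.symm
    (adjP h2 h3 (pa6 (by decide))) (adjP h3 h4 (pa6 (by decide)))
    (adjP h4 h5 (pa6 (by decide)))
    (v_nadj hN u2) (v_nadj hN u3) (v_nadj hN u4) (v_nadj hN u5)
    (fun h => noBP h3 h1 (npa6 (by decide)) b1 hbB h.symm)
    (fun h => noBP h4 h1 (npa6 (by decide)) b1 hbB h.symm)
    (fun h => noBP h5 h1 (npa6 (by decide)) b1 hbB h.symm)
    (nadjP h2 h4 (npa6 (by decide))) (nadjP h2 h5 (npa6 (by decide)))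
    (nadjP h3 h5 (npa6 (by decide)))
    (ne_v_real hN (adjP h2 h3 (pa6 (by decide)))).symm
    (ne_v_real hN (adjP h3 h4 (pa6 (by decide)))).symm
    (ne_v_real hN (adjP h4 h5 (pa6 (by decide)))).symm
    (ne_v_real hN (adjP h5 h4 (pa6 (by decide)))).symm
    (neABx (Set.mem_union_right A hbB) u3.2) (neABx (Set.mem_union_right A hbB) u4.2)
    (neABx (Set.mem_union_right A hbB) u5.2)
    (neP h2 h4 (by decide)) (neP h2 h5 (by decide)) (neP h3 h5 (by decide)))

/-- `a` at position 1, `b` at position 2. -/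
lemma pairAt1 (hN : A ∪ B = G.neighborSet v) (hdisj : Disjoint A B)
    (hfree : ¬ Nonempty (pathGraph 6 ↪g G))
    (h1 : f 1 = Sum.inr 0) (h2 : f 2 = Sum.inr 1)
    {u0 u3 u4 u5 : {w : V // w ∉ A ∪ B}}
    (h0 : f 0 = Sum.inl u0) (h3 : f 3 = Sum.inl u3)
    (h4 : f 4 = Sum.inl u4) (h5 : f 5 = Sum.inl u5) : False := by
  classical
  obtain ⟨a1, ha1A, ha1⟩ := hasAP h0 h1 (pa6 (by decide))
  obtain ⟨b1, hb1B, hb1⟩ := hasBP h3 h2 (pa6 (by decide))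
  by_cases hc : ∃ x y, x ∈ A ∧ y ∈ B ∧ G.Adj u0.1 x ∧ G.Adj u3.1 y ∧ G.Adj x y
  · obtain ⟨x, y, hxA, hyB, hx0, hy3, hxy⟩ := hc
    exact hfree (buildP6 u0.1 x y u3.1 u4.1 u5.1
      hx0 hxy hy3.symm
      (adjP h3 h4 (pa6 (by decide))) (adjP h4 h5 (pa6 (by decide)))
      (noBP h0 h2 (npa6 (by decide)) y hyB)
      (nadjP h0 h3 (npa6 (by decide))) (nadjP h0 h4 (npa6 (by decide)))
      (nadjP h0 h5 (npa6 (by decide)))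
      (fun h => noAP h3 h1 (npa6 (by decide)) x hxA h.symm)
      (fun h => noAP h4 h1 (npa6 (by decide)) x hxA h.symm)
      (fun h => noAP h5 h1 (npa6 (by decide)) x hxA h.symm)
      (fun h => noBP h4 h2 (npa6 (by decide)) y hyB h.symm)
      (fun h => noBP h5 h2 (npa6 (by decide)) y hyB h.symm)
      (nadjP h3 h5 (npa6 (by decide)))
      (neABx (Set.mem_union_right A hyB) u0.2).symm
      (neP h0 h3 (by decide)) (neP h0 h4 (by decide)) (neP h0 h5 (by decide))
      (neABx (Set.mem_union_left B hxA) u3.2) (neABx (Set.mem_union_left B hxA) u4.2)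
      (neABx (Set.mem_union_left B hxA) u5.2)
      (neABx (Set.mem_union_right A hyB) u4.2) (neABx (Set.mem_union_right A hyB) u5.2)
      (neP h3 h5 (by decide)))
  · push_neg at hc
    have hnab : ¬ G.Adj a1 b1 := hc a1 b1 ha1A hb1B ha1 hb1
    exact hfree (buildP6 u0.1 a1 v b1 u3.1 u4.1
      ha1
      (v_adj hN (Set.mem_union_left B ha1A)).symm
      (v_adj hN (Set.mem_union_right A hb1B))
      hb1.symm
      (adjP h3 h4 (pa6 (by decide)))
      (fun h => v_nadj hN u0 h.symm)
      (noBP h0 h2 (npa6 (by decide)) b1 hb1B)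
      (nadjP h0 h3 (npa6 (by decide))) (nadjP h0 h4 (npa6 (by decide)))
      hnab
      (fun h => noAP h3 h1 (npa6 (by decide)) a1 ha1A h.symm)
      (fun h => noAP h4 h1 (npa6 (by decide)) a1 ha1A h.symm)
      (v_nadj hN u3) (v_nadj hN u4)
      (fun h => noBP h4 h2 (npa6 (by decide)) b1 hb1B h.symm)
      (fun e => noBP h0 h2 (npa6 (by decide)) b1 hb1B
        (by rw [e]; exact v_adj hN (Set.mem_union_right A hb1B)))
      (neABx (Set.mem_union_right A hb1B) u0.2).symm
      (neP h0 h3 (by decide)) (neP h0 h4 (by decide))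
      (fun e => Set.disjoint_left.mp hdisj ha1A (e ▸ hb1B))
      (neABx (Set.mem_union_left B ha1A) u3.2) (neABx (Set.mem_union_left B ha1A) u4.2)
      (ne_v_real hN (adjP h3 h4 (pa6 (by decide)))).symm
      (ne_v_real hN (adjP h4 h5 (pa6 (by decide)))).symm
      (neABx (Set.mem_union_right A hb1B) u4.2))

/-- `a` at position 2, `b` at position 3. -/
lemma pairAt2 (hN : A ∪ B = G.neighborSet v) (hdisj : Disjoint A B)
    (hfree : ¬ Nonempty (pathGraph 6 ↪g G))
    (h2 : f 2 = Sum.inr 0) (h3 : f 3 = Sum.inr 1)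
    {u0 u1 u4 u5 : {w : V // w ∉ A ∪ B}}
    (h0 : f 0 = Sum.inl u0) (h1 : f 1 = Sum.inl u1)
    (h4 : f 4 = Sum.inl u4) (h5 : f 5 = Sum.inl u5) : False := by
  classical
  obtain ⟨a1, ha1A, ha1⟩ := hasAP h1 h2 (pa6 (by decide))
  obtain ⟨b1, hb1B, hb1⟩ := hasBP h4 h3 (pa6 (by decide))
  by_cases hc : ∃ x y, x ∈ A ∧ y ∈ B ∧ G.Adj u1.1 x ∧ G.Adj u4.1 y ∧ G.Adj x y
  · obtain ⟨x, y, hxA, hyB, hx1, hy4, hxy⟩ := hc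
    exact hfree (buildP6 u0.1 u1.1 x y u4.1 u5.1
      (adjP h0 h1 (pa6 (by decide)))
      hx1 hxy hy4.symm
      (adjP h4 h5 (pa6 (by decide)))
      (noAP h0 h2 (npa6 (by decide)) x hxA)
      (noBP h0 h3 (npa6 (by decide)) y hyB)
      (nadjP h0 h4 (npa6 (by decide))) (nadjP h0 h5 (npa6 (by decide)))
      (noBP h1 h3 (npa6 (by decide)) y hyB)
      (nadjP h1 h4 (npa6 (by decide))) (nadjP h1 h5 (npa6 (by decide)))
      (fun h => noAP h4 h2 (npa6 (by decide)) x hxA h.symm)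
      (fun h => noAP h5 h2 (npa6 (by decide)) x hxA h.symm)
      (fun h => noBP h5 h3 (npa6 (by decide)) y hyB h.symm)
      (neABx (Set.mem_union_left B hxA) u0.2).symm
      (neABx (Set.mem_union_right A hyB) u0.2).symm
      (neP h0 h4 (by decide)) (neP h0 h5 (by decide))
      (neABx (Set.mem_union_right A hyB) u1.2).symm
      (neP h1 h4 (by decide)) (neP h1 h5 (by decide))
      (neABx (Set.mem_union_left B hxA) u4.2) (neABx (Set.mem_union_left B hxA) u5.2)
      (neABx (Set.mem_union_right A hyB) u5.2))
  · push_neg at hc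
    have hnab : ¬ G.Adj a1 b1 := hc a1 b1 ha1A hb1B ha1 hb1
    exact hfree (buildP6 u0.1 u1.1 a1 v b1 u4.1
      (adjP h0 h1 (pa6 (by decide)))
      ha1
      (v_adj hN (Set.mem_union_left B ha1A)).symm
      (v_adj hN (Set.mem_union_right A hb1B))
      hb1.symm
      (noAP h0 h2 (npa6 (by decide)) a1 ha1A)
      (fun h => v_nadj hN u0 h.symm)
      (noBP h0 h3 (npa6 (by decide)) b1 hb1B)
      (nadjP h0 h4 (npa6 (by decide)))
      (fun h => v_nadj hN u1 h.symm)
      (noBP h1 h3 (npa6 (by decide)) b1 hb1B)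
      (nadjP h1 h4 (npa6 (by decide)))
      hnab
      (fun h => noAP h4 h2 (npa6 (by decide)) a1 ha1A h.symm)
      (v_nadj hN u4)
      (neABx (Set.mem_union_left B ha1A) u0.2).symm
      (ne_v_real hN (adjP h0 h1 (pa6 (by decide))))
      (neABx (Set.mem_union_right A hb1B) u0.2).symm
      (neP h0 h4 (by decide))
      (ne_v_real hN (adjP h1 h0 (pa6 (by decide))))
      (neABx (Set.mem_union_right A hb1B) u1.2).symm
      (neP h1 h4 (by decide))
      (fun e => Set.disjoint_left.mp hdisj ha1A (e.symm ▸ hb1B))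
      (neABx (Set.mem_union_left B ha1A) u4.2)
      (ne_v_real hN (adjP h4 h5 (pa6 (by decide)))).symm)

end Core
section Glue

variable {V : Type*} {G : SimpleGraph V} {A B : Set V} {v : V}

/-- Reversal automorphism of `pathGraph 6`. -/
def rev6 : pathGraph 6 ≃g pathGraph 6 :=
  ⟨⟨fun i => ![5,4,3,2,1,0] i, fun i => ![5,4,3,2,1,0] i, by decide, by decide⟩, by
    intro a b
    fin_cases a <;> fin_cases b <;>
      first
        | exact iff_of_true (by rw [pathGraph_adj]; decide) (by rw [pathGraph_adj]; decide)
        | exact iff_of_false (by rw [pathGraph_adj]; decide) (by rw [pathGraph_adj]; decide)⟩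

/-- The vertex map swapping the roles of `A` and `B`. -/
def swapFun (A B : Set V) :
    ({w : V // w ∉ A ∪ B} ⊕ Fin 2) → ({w : V // w ∉ B ∪ A} ⊕ Fin 2)
  | Sum.inl u => Sum.inl ⟨u.1, fun h => u.2 ((Set.mem_union _ _ _).mpr ((Set.mem_union _ _ _).mp h).symm)⟩
  | Sum.inr i => Sum.inr (![1,0] i)

lemma swapFun_inr1 {x : {w : V // w ∉ A ∪ B} ⊕ Fin 2}
    (h : swapFun A B x = Sum.inr 1) : x = Sum.inr 0 := by
  match x with
  | Sum.inl u => simp [swapFun] at h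
  | Sum.inr i =>
    fin_cases i
    · rfl
    · simp [swapFun] at h

/-- Swapping `A` and `B` gives an embedding of contracted graphs. -/
def swapEmb (G : SimpleGraph V) (A B : Set V) :
    contractBip G A B ↪g contractBip G B A := by
  refine ⟨⟨swapFun A B, ?_⟩, ?_⟩
  · rintro (u | i) (w | j) h
    · simp only [swapFun, Sum.inl.injEq, Subtype.mk.injEq] at h
      exact congrArg Sum.inl (Subtype.ext h)
    · simp [swapFun] at h
    · simp [swapFun] at h
    · simp only [swapFun, Sum.inr.injEq] at h
      fin_cases i <;> fin_cases j <;> simp_all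
  · rintro (u | i) (w | j)
    · show (contractBip G B A).Adj (Sum.inl _) (Sum.inl _) ↔ _
      rw [cb_inl_inl, cb_inl_inl]
    · show (contractBip G B A).Adj (Sum.inl _) (Sum.inr _) ↔ _
      fin_cases j
      · show (contractBip G B A).Adj (Sum.inl _) (Sum.inr 1) ↔
          (contractBip G A B).Adj (Sum.inl u) (Sum.inr 0)
        rw [cb_inl_b, cb_inl_a]
      · show (contractBip G B A).Adj (Sum.inl _) (Sum.inr 0) ↔
          (contractBip G A B).Adj (Sum.inl u) (Sum.inr 1)
        rw [cb_inl_a, cb_inl_b]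
    · show (contractBip G B A).Adj (Sum.inr _) (Sum.inl _) ↔ _
      rw [(contractBip G B A).adj_comm, (contractBip G A B).adj_comm]
      fin_cases i
      · show (contractBip G B A).Adj (Sum.inl _) (Sum.inr 1) ↔
          (contractBip G A B).Adj (Sum.inl w) (Sum.inr 0)
        rw [cb_inl_b, cb_inl_a]
      · show (contractBip G B A).Adj (Sum.inl _) (Sum.inr 0) ↔
          (contractBip G A B).Adj (Sum.inl w) (Sum.inr 1)
        rw [cb_inl_a, cb_inl_b]
    · fin_cases i <;> fin_cases j <;>
        simp [swapFun, contractBip, fromRel_adj]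
      · exact Or.inr ⟨rfl, rfl⟩
      · exact Or.inl ⟨rfl, rfl⟩

variable {f : pathGraph 6 ↪g contractBip G A B}

lemma realOfSingle {i : Fin 6} (f : pathGraph 6 ↪g contractBip G A B) (k : Fin 6)
    (hi : f i = Sum.inr 0) (hb : ∀ j, f j ≠ Sum.inr 1) (hk : k ≠ i) :
    ∃ u, f k = Sum.inl u := by
  match h : f k with
  | Sum.inl u => exact ⟨u, rfl⟩
  | Sum.inr m =>
    fin_cases m
    · exact absurd (f.injective (h.trans hi.symm)) hk
    · exact absurd h (hb k)

lemma realOfPair {i j : Fin 6} (f : pathGraph 6 ↪g contractBip G A B) (k : Fin 6)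
    (hi : f i = Sum.inr 0) (hj : f j = Sum.inr 1) (hki : k ≠ i) (hkj : k ≠ j) :
    ∃ u, f k = Sum.inl u := by
  match h : f k with
  | Sum.inl u => exact ⟨u, rfl⟩
  | Sum.inr m =>
    fin_cases m
    · exact absurd (f.injective (h.trans hi.symm)) hki
    · exact absurd (f.injective (h.trans hj.symm)) hkj

/-- Single fake vertex `a` on the path. -/
lemma singleMain (hN : A ∪ B = G.neighborSet v)
    (hAst : ∀ x ∈ A, ∀ y ∈ A, ¬ G.Adj x y)
    (hfree : ¬ Nonempty (pathGraph 6 ↪g G))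
    (f : pathGraph 6 ↪g contractBip G A B) (i : Fin 6)
    (hi : f i = Sum.inr 0) (hb : ∀ j, f j ≠ Sum.inr 1) : False := by
  have hb' : ∀ j, (f.comp rev6.toRelEmbedding) j ≠ Sum.inr 1 := fun j => hb _
  fin_cases i
  · obtain ⟨u1, w1⟩ := realOfSingle f 1 hi hb (by decide)
    obtain ⟨u2, w2⟩ := realOfSingle f 2 hi hb (by decide)
    obtain ⟨u3, w3⟩ := realOfSingle f 3 hi hb (by decide)
    obtain ⟨u4, w4⟩ := realOfSingle f 4 hi hb (by decide)
    obtain ⟨u5, w5⟩ := realOfSingle f 5 hi hb (by decide)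
    exact singleAt0 hN hfree hi w1 w2 w3 w4 w5
  · obtain ⟨u0, w0⟩ := realOfSingle f 0 hi hb (by decide)
    obtain ⟨u2, w2⟩ := realOfSingle f 2 hi hb (by decide)
    obtain ⟨u3, w3⟩ := realOfSingle f 3 hi hb (by decide)
    obtain ⟨u4, w4⟩ := realOfSingle f 4 hi hb (by decide)
    obtain ⟨u5, w5⟩ := realOfSingle f 5 hi hb (by decide)
    exact singleAt1 hN hAst hfree hi w0 w2 w3 w4 w5
  · obtain ⟨u0, w0⟩ := realOfSingle f 0 hi hb (by decide)
    obtain ⟨u1, w1⟩ := realOfSingle f 1 hi hb (by decide)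
    obtain ⟨u3, w3⟩ := realOfSingle f 3 hi hb (by decide)
    obtain ⟨u4, w4⟩ := realOfSingle f 4 hi hb (by decide)
    obtain ⟨u5, w5⟩ := realOfSingle f 5 hi hb (by decide)
    exact singleAt2 hN hAst hfree hi w0 w1 w3 w4 w5
  · -- i = 3 : reversed path has `a` at position 2
    have hi' : (f.comp rev6.toRelEmbedding) 2 = Sum.inr 0 := hi
    obtain ⟨u0, w0⟩ := realOfSingle _ 0 hi' hb' (by decide)
    obtain ⟨u1, w1⟩ := realOfSingle _ 1 hi' hb' (by decide)
    obtain ⟨u3, w3⟩ := realOfSingle _ 3 hi' hb' (by decide)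
    obtain ⟨u4, w4⟩ := realOfSingle _ 4 hi' hb' (by decide)
    obtain ⟨u5, w5⟩ := realOfSingle _ 5 hi' hb' (by decide)
    exact singleAt2 hN hAst hfree hi' w0 w1 w3 w4 w5
  · -- i = 4
    have hi' : (f.comp rev6.toRelEmbedding) 1 = Sum.inr 0 := hi
    obtain ⟨u0, w0⟩ := realOfSingle _ 0 hi' hb' (by decide)
    obtain ⟨u2, w2⟩ := realOfSingle _ 2 hi' hb' (by decide)
    obtain ⟨u3, w3⟩ := realOfSingle _ 3 hi' hb' (by decide)
    obtain ⟨u4, w4⟩ := realOfSingle _ 4 hi' hb' (by decide)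
    obtain ⟨u5, w5⟩ := realOfSingle _ 5 hi' hb' (by decide)
    exact singleAt1 hN hAst hfree hi' w0 w2 w3 w4 w5
  · -- i = 5
    have hi' : (f.comp rev6.toRelEmbedding) 0 = Sum.inr 0 := hi
    obtain ⟨u1, w1⟩ := realOfSingle _ 1 hi' hb' (by decide)
    obtain ⟨u2, w2⟩ := realOfSingle _ 2 hi' hb' (by decide)
    obtain ⟨u3, w3⟩ := realOfSingle _ 3 hi' hb' (by decide)
    obtain ⟨u4, w4⟩ := realOfSingle _ 4 hi' hb' (by decide)
    obtain ⟨u5, w5⟩ := realOfSingle _ 5 hi' hb' (by decide)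
    exact singleAt0 hN hfree hi' w1 w2 w3 w4 w5

/-- Both fake vertices on the path, `a` immediately before `b`. -/
lemma pairMain (hN : A ∪ B = G.neighborSet v) (hdisj : Disjoint A B)
    (hfree : ¬ Nonempty (pathGraph 6 ↪g G))
    (f : pathGraph 6 ↪g contractBip G A B) (i j : Fin 6)
    (hi : f i = Sum.inr 0) (hj : f j = Sum.inr 1) (hij : i.val + 1 = j.val) : False := by
  have hN' : B ∪ A = G.neighborSet v := by rw [Set.union_comm]; exact hN
  have hj6 := j.isLt
  have hlt : i.val + 1 < 6 := by omega
  have hjeq : j = ⟨i.val + 1, hlt⟩ := Fin.ext hij.symm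
  subst hjeq
  fin_cases i
  · have hi0 : f 0 = Sum.inr 0 := hi
    have hj1 : f 1 = Sum.inr 1 := hj
    obtain ⟨u2, w2⟩ := realOfPair f 2 hi0 hj1 (by decide) (by decide)
    obtain ⟨u3, w3⟩ := realOfPair f 3 hi0 hj1 (by decide) (by decide)
    obtain ⟨u4, w4⟩ := realOfPair f 4 hi0 hj1 (by decide) (by decide)
    obtain ⟨u5, w5⟩ := realOfPair f 5 hi0 hj1 (by decide) (by decide)
    exact pairAt0 hN hfree hi0 hj1 w2 w3 w4 w5
  · have hi1 : f 1 = Sum.inr 0 := hi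
    have hj2 : f 2 = Sum.inr 1 := hj
    obtain ⟨u0, w0⟩ := realOfPair f 0 hi1 hj2 (by decide) (by decide)
    obtain ⟨u3, w3⟩ := realOfPair f 3 hi1 hj2 (by decide) (by decide)
    obtain ⟨u4, w4⟩ := realOfPair f 4 hi1 hj2 (by decide) (by decide)
    obtain ⟨u5, w5⟩ := realOfPair f 5 hi1 hj2 (by decide) (by decide)
    exact pairAt1 hN hdisj hfree hi1 hj2 w0 w3 w4 w5
  · have hi2 : f 2 = Sum.inr 0 := hi
    have hj3 : f 3 = Sum.inr 1 := hj
    obtain ⟨u0, w0⟩ := realOfPair f 0 hi2 hj3 (by decide) (by decide)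
    obtain ⟨u1, w1⟩ := realOfPair f 1 hi2 hj3 (by decide) (by decide)
    obtain ⟨u4, w4⟩ := realOfPair f 4 hi2 hj3 (by decide) (by decide)
    obtain ⟨u5, w5⟩ := realOfPair f 5 hi2 hj3 (by decide) (by decide)
    exact pairAt2 hN hdisj hfree hi2 hj3 w0 w1 w4 w5
  · -- i = 3, j = 4 : reverse and swap
    have hi3 : f 3 = Sum.inr 0 := hi
    have hj4 : f 4 = Sum.inr 1 := hj
    set g := (swapEmb G A B).comp (f.comp rev6.toRelEmbedding) with hg
    have hi' : g 1 = Sum.inr 0 := by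
      show swapFun A B (f 4) = Sum.inr 0
      rw [hj4]; rfl
    have hj' : g 2 = Sum.inr 1 := by
      show swapFun A B (f 3) = Sum.inr 1
      rw [hi3]; rfl
    obtain ⟨u0, w0⟩ := realOfPair g 0 hi' hj' (by decide) (by decide)
    obtain ⟨u3, w3⟩ := realOfPair g 3 hi' hj' (by decide) (by decide)
    obtain ⟨u4, w4⟩ := realOfPair g 4 hi' hj' (by decide) (by decide)
    obtain ⟨u5, w5⟩ := realOfPair g 5 hi' hj' (by decide) (by decide)
    exact pairAt1 hN' hdisj.symm hfree hi' hj' w0 w3 w4 w5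
  · -- i = 4, j = 5
    have hi4 : f 4 = Sum.inr 0 := hi
    have hj5 : f 5 = Sum.inr 1 := hj
    set g := (swapEmb G A B).comp (f.comp rev6.toRelEmbedding) with hg
    have hi' : g 0 = Sum.inr 0 := by
      show swapFun A B (f 5) = Sum.inr 0
      rw [hj5]; rfl
    have hj' : g 1 = Sum.inr 1 := by
      show swapFun A B (f 4) = Sum.inr 1
      rw [hi4]; rfl
    obtain ⟨u2, w2⟩ := realOfPair g 2 hi' hj' (by decide) (by decide)
    obtain ⟨u3, w3⟩ := realOfPair g 3 hi' hj' (by decide) (by decide)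
    obtain ⟨u4, w4⟩ := realOfPair g 4 hi' hj' (by decide) (by decide)
    obtain ⟨u5, w5⟩ := realOfPair g 5 hi' hj' (by decide) (by decide)
    exact pairAt0 hN' hfree hi' hj' w2 w3 w4 w5
  · -- i = 5 : impossible
    exact absurd hlt (by decide)

end Glue

theorem stmt_6 {V : Type*} (G : SimpleGraph V) (v : V) (A B : Set V)
    (hdisj : Disjoint A B) (hN : A ∪ B = G.neighborSet v)
    (hAstable : ∀ x ∈ A, ∀ y ∈ A, ¬ G.Adj x y)
    (hBstable : ∀ x ∈ B, ∀ y ∈ B, ¬ G.Adj x y)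
    (hconn : (G.induce (A ∪ B)).Connected)
    (hfree : ¬ Nonempty (pathGraph 6 ↪g G)) :
    ¬ Nonempty (pathGraph 6 ↪g contractBip G A B) := by
  rintro ⟨f⟩
  classical
  have hN' : B ∪ A = G.neighborSet v := by rw [Set.union_comm]; exact hN
  by_cases ha : ∃ i, f i = Sum.inr 0
  · obtain ⟨i, hi⟩ := ha
    by_cases hb : ∃ j, f j = Sum.inr 1
    · obtain ⟨j, hj⟩ := hb
      have hadj : (pathGraph 6).Adj i j := f.map_rel_iff.mp (by rw [hi, hj]; exact cb_ab)
      rw [pathGraph_adj] at hadj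
      rcases hadj with h | h
      · exact pairMain hN hdisj hfree f i j hi hj h
      · set g := (swapEmb G A B).comp f with hg
        have hj' : g j = Sum.inr 0 := by
          show swapFun A B (f j) = Sum.inr 0
          rw [hj]; rfl
        have hi' : g i = Sum.inr 1 := by
          show swapFun A B (f i) = Sum.inr 1
          rw [hi]; rfl
        exact pairMain hN' hdisj.symm hfree g j i hj' hi' h
    · push_neg at hb
      exact singleMain hN hAstable hfree f i hi hb
  · push_neg at ha
    by_cases hb : ∃ j, f j = Sum.inr 1
    · obtain ⟨j, hj⟩ := hb
      set g := (swapEmb G A B).comp f with hg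
      have hj' : g j = Sum.inr 0 := by
        show swapFun A B (f j) = Sum.inr 0
        rw [hj]; rfl
      have hb' : ∀ k, g k ≠ Sum.inr 1 := by
        intro k hk
        exact ha k (swapFun_inr1 hk)
      exact singleMain hN' hBstable hfree g j hj' hb'
    · push_neg at hb
      refine allReal hfree (f := f) ?_
      intro k
      match h : f k with
      | Sum.inl u => exact ⟨u, rfl⟩
      | Sum.inr m =>
        fin_cases m
        · exact absurd h (ha k)
        · exact absurd h (hb k)
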